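/- For a fully injective similarity scheme, the equivalence relation R_∞ on Y^ℕ is closed (its graph is closed in Y^ℕ × Y^ℕ); consequently X_∞ = Y^ℕ/R_∞ with the quotient topology is a compact Hausdorff space. -/

import Mathlib

set_option linter.unusedSectionVars false
set_option linter.unusedVariables false

variable {Y : Type}

/-- Iterated embedding φ_{n,m} : X m → X n for m ≤ n. -/
def phiTo (X : ℕ → Type) (φs : ∀ n, X n → X (n + 1)) {m n : ℕ} (h : m ≤ n) (x : X m) : X n :=
  Nat.leRecOn h (fun {k} x => φs k x) x

/-- Iterated projection π_{m,q} : Yᵐ × X q → X (q+m), the head of the word acting outermost. -/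
def piFin (X : ℕ → Type) (πo : ∀ n, Y → X n → X (n + 1)) :
    ∀ (m q : ℕ), (Fin m → Y) → X q → X (q + m)
  | 0, _, _, x => x
  | m + 1, q, y, x => πo (q + m) (y 0) (piFin X πo m q (fun i => y i.succ) x)

/-- Iterated projection π_{m,0} : Yᵐ × X 0 → X m. -/
def piFin0 (X : ℕ → Type) (πo : ∀ n, Y → X n → X (n + 1)) :
    ∀ (m : ℕ), (Fin m → Y) → X 0 → X m
  | 0, _, x => x
  | m + 1, y, x => πo m (y 0) (piFin0 X πo m (fun i => y i.succ) x)

/-- The set Γ_n(x_n) ⊂ Y^ℕ : all infinite addresses y such that for every p ≥ n the point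
φ_{p,n}(x_n) lies in the cell C(y₁,…,y_p) = π_{p,0}({(y₁,…,y_p)} × X 0). -/
def Gamma (X : ℕ → Type) (φs : ∀ n, X n → X (n + 1)) (πo : ∀ n, Y → X n → X (n + 1))
    (n : ℕ) (xn : X n) : Set (ℕ → Y) :=
  { y | ∀ p, ∀ h : n ≤ p, ∃ x0 : X 0, phiTo X φs h xn = piFin0 X πo p (fun i : Fin p => y i.1) x0 }

/-- The relation R on Y^ℕ: related iff equal or both in some Γ_n(x_n). -/
def simRel (X : ℕ → Type) (φs : ∀ n, X n → X (n + 1)) (πo : ∀ n, Y → X n → X (n + 1)) :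
    (ℕ → Y) → (ℕ → Y) → Prop :=
  fun a b => a = b ∨ ∃ n, ∃ xn : X n, a ∈ Gamma X φs πo n xn ∧ b ∈ Gamma X φs πo n xn

section AuxLemmas

variable {X : ℕ → Type} (φs : ∀ n, X n → X (n + 1)) (πo : ∀ n, Y → X n → X (n + 1))

lemma phiTo_self' {n : ℕ} (h : n ≤ n) (x : X n) : phiTo X φs h x = x :=
  Nat.leRecOn_self x

lemma phiTo_succ' {m n : ℕ} (h : m ≤ n) (h' : m ≤ n + 1) (x : X m) :
    phiTo X φs h' x = φs n (phiTo X φs h x) :=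
  Nat.leRecOn_succ h x

lemma phiTo_succ_self' {n : ℕ} (h : n ≤ n + 1) (x : X n) : phiTo X φs h x = φs n x :=
  Nat.leRecOn_succ' x

lemma phiTo_trans' {m n k : ℕ} (h1 : m ≤ n) (h2 : n ≤ k) (h3 : m ≤ k) (x : X m) :
    phiTo X φs h3 x = phiTo X φs h2 (phiTo X φs h1 x) :=
  Nat.leRecOn_trans h1 h2 x

lemma phiTo_cont' [∀ n, TopologicalSpace (X n)] (hφc : ∀ n, Continuous (φs n))
    {m n : ℕ} (h : m ≤ n) : Continuous (phiTo X φs h) := by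
  induction n, h using Nat.le_induction with
  | base => exact continuous_id.congr fun x => (phiTo_self' φs _ x).symm
  | succ n h ih => exact ((hφc n).comp ih).congr fun x => (phiTo_succ' φs h _ x).symm

lemma piFin0_cont' [TopologicalSpace Y] [∀ n, TopologicalSpace (X n)]
    (hπc : ∀ n, Continuous fun p : Y × X n => πo n p.1 p.2) (m : ℕ) :
    Continuous fun p : (Fin m → Y) × X 0 => piFin0 X πo m p.1 p.2 := by
  induction m with
  | zero => exact continuous_snd.congr fun p => rfl
  | succ m ih =>
    show Continuous fun p : (Fin (m+1) → Y) × X 0 =>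
      πo m (p.1 0) (piFin0 X πo m (fun i => p.1 i.succ) p.2)
    have h1 : Continuous fun p : (Fin (m+1) → Y) × X 0 =>
        ((fun i : Fin m => p.1 i.succ), p.2) :=
      (continuous_pi fun i => (continuous_apply i.succ).comp continuous_fst).prodMk
        continuous_snd
    exact (hπc m).comp (((continuous_apply 0).comp continuous_fst).prodMk (ih.comp h1))

lemma pio_phiTo' (hcomm : ∀ (n : ℕ) (y : Y) (x : X n), πo (n + 1) y (φs n x) = φs (n + 1) (πo n y x))
    (n : ℕ) (y : Y) (a : X 0) :
    πo n y (phiTo X φs (Nat.zero_le n) a)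
      = phiTo X φs (Nat.succ_le_succ (Nat.zero_le n)) (πo 0 y a) := by
  induction n with
  | zero => rw [phiTo_self', phiTo_self']
  | succ n ih =>
    rw [phiTo_succ' φs (Nat.zero_le n), hcomm, ih,
      ← phiTo_succ' φs (Nat.succ_le_succ (Nat.zero_le n))]

lemma piFin0_word_succ' (n : ℕ) (y : ℕ → Y) (c : X 0) :
    piFin0 X πo (n+1) (fun i : Fin (n+1) => y i.1) c
      = πo n (y 0) (piFin0 X πo n (fun i : Fin n => y (i.1+1)) c) := by
  simp only [piFin0, Fin.val_zero, Fin.val_succ]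

lemma lemC' (hφi : ∀ n, Function.Injective (φs n))
    (hπs : ∀ n, Function.Surjective fun p : Y × X n => πo n p.1 p.2)
    (hcomm : ∀ (n : ℕ) (y : Y) (x : X n), πo (n + 1) y (φs n x) = φs (n + 1) (πo n y x))
    (hquot : ∀ (n : ℕ) (y y' : Y) (ξ ξ' : X n), πo n y ξ = πo n y' ξ' → (y, ξ) ≠ (y', ξ') →
      ∃ x0 x0' : X 0, ξ = phiTo X φs (Nat.zero_le n) x0 ∧ ξ' = phiTo X φs (Nat.zero_le n) x0' ∧
        πo 0 y x0 = πo 0 y' x0') :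
    ∀ (n : ℕ) (y : ℕ → Y) (x : X n) (c : X 0),
      φs n x = piFin0 X πo (n+1) (fun i : Fin (n+1) => y i.1) c →
      ∃ c' : X 0, x = piFin0 X πo n (fun i : Fin n => y i.1) c' := by
  intro n
  induction n with
  | zero => exact fun y x c _ => ⟨x, rfl⟩
  | succ n ih =>
    intro y x c h
    rw [piFin0_word_succ'] at h
    obtain ⟨⟨η, ξ⟩, hx0⟩ := hπs n x
    have hx : πo n η ξ = x := hx0
    have h2 : φs (n+1) x = πo (n+1) η (φs n ξ) := by rw [← hx]; exact (hcomm n η ξ).symm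
    have key : πo (n+1) (y 0) (piFin0 X πo (n+1) (fun i : Fin (n+1) => y (i.1+1)) c)
        = πo (n+1) η (φs n ξ) := h.symm.trans h2
    by_cases hcase : ((y 0 : Y), piFin0 X πo (n+1) (fun i : Fin (n+1) => y (i.1+1)) c)
        = (η, φs n ξ)
    · rw [Prod.mk.injEq] at hcase
      obtain ⟨h1, h2'⟩ := hcase
      obtain ⟨c', hc'⟩ := ih (fun k => y (k+1)) ξ c h2'.symm
      refine ⟨c', ?_⟩
      rw [piFin0_word_succ', ← hc', h1, hx]
    · obtain ⟨a, b, hDa, hξb, hab⟩ := hquot (n+1) (y 0) η _ (φs n ξ) key hcase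
      have hξ : ξ = phiTo X φs (Nat.zero_le n) b :=
        hφi n (by rw [hξb, phiTo_succ' φs (Nat.zero_le n)])
      have hDa' : φs n (phiTo X φs (Nat.zero_le n) a)
          = piFin0 X πo (n+1) (fun i : Fin (n+1) => y (i.1+1)) c := by
        rw [← phiTo_succ' φs (Nat.zero_le n) (Nat.zero_le (n+1)), ← hDa]
      obtain ⟨c'', hc''⟩ := ih (fun k => y (k+1)) (phiTo X φs (Nat.zero_le n) a) c hDa'
      refine ⟨c'', ?_⟩
      rw [piFin0_word_succ', ← hc'', pio_phiTo' φs πo hcomm, hab,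
        ← pio_phiTo' φs πo hcomm, ← hξ, hx]

lemma gamma_up' {n : ℕ} {x : X n} {y : ℕ → Y} (hy : y ∈ Gamma X φs πo n x) :
    y ∈ Gamma X φs πo (n+1) (φs n x) := by
  intro p hp
  obtain ⟨c, hc⟩ := hy p (Nat.le_of_succ_le hp)
  refine ⟨c, ?_⟩
  rw [← hc, ← phiTo_succ_self' φs (Nat.le_succ n),
    ← phiTo_trans' φs (Nat.le_succ n) hp (Nat.le_of_succ_le hp)]

lemma gamma_le' {n k : ℕ} (h : n ≤ k) {x : X n} {y : ℕ → Y} (hy : y ∈ Gamma X φs πo n x) :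
    y ∈ Gamma X φs πo k (phiTo X φs h x) := by
  induction k, h using Nat.le_induction with
  | base => rwa [phiTo_self']
  | succ k hk ih => rw [phiTo_succ' φs hk]; exact gamma_up' φs πo ih

lemma gamma_down' (hφi : ∀ n, Function.Injective (φs n))
    (hπs : ∀ n, Function.Surjective fun p : Y × X n => πo n p.1 p.2)
    (hcomm : ∀ (n : ℕ) (y : Y) (x : X n), πo (n + 1) y (φs n x) = φs (n + 1) (πo n y x))
    (hquot : ∀ (n : ℕ) (y y' : Y) (ξ ξ' : X n), πo n y ξ = πo n y' ξ' → (y, ξ) ≠ (y', ξ') →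
      ∃ x0 x0' : X 0, ξ = phiTo X φs (Nat.zero_le n) x0 ∧ ξ' = phiTo X φs (Nat.zero_le n) x0' ∧
        πo 0 y x0 = πo 0 y' x0')
    {n : ℕ} {x : X n} {y : ℕ → Y}
    (hy : y ∈ Gamma X φs πo (n+1) (φs n x)) : y ∈ Gamma X φs πo n x := by
  intro p hp
  rcases Nat.lt_or_ge p (n+1) with h | h
  · have hpn : p = n := le_antisymm (Nat.lt_succ_iff.mp h) hp
    subst hpn
    obtain ⟨c, hc⟩ := hy (p+1) (le_refl _)
    rw [phiTo_self'] at hc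
    obtain ⟨c', hc'⟩ := lemC' φs πo hφi hπs hcomm hquot p y x c hc
    exact ⟨c', by rw [phiTo_self']; exact hc'⟩
  · obtain ⟨c, hc⟩ := hy p h
    refine ⟨c, ?_⟩
    rw [← hc, ← phiTo_succ_self' φs (Nat.le_succ n),
      ← phiTo_trans' φs (Nat.le_succ n) h hp]

lemma lemD' (hcomm : ∀ (n : ℕ) (y : Y) (x : X n), πo (n + 1) y (φs n x) = φs (n + 1) (πo n y x))
    (hquot : ∀ (n : ℕ) (y y' : Y) (ξ ξ' : X n), πo n y ξ = πo n y' ξ' → (y, ξ) ≠ (y', ξ') →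
      ∃ x0 x0' : X 0, ξ = phiTo X φs (Nat.zero_le n) x0 ∧ ξ' = phiTo X φs (Nat.zero_le n) x0' ∧
        πo 0 y x0 = πo 0 y' x0') :
    ∀ (n : ℕ) (y y' : ℕ → Y) (c c' : X 0),
      piFin0 X πo (n+1) (fun i : Fin (n+1) => y i.1) c
        = piFin0 X πo (n+1) (fun i : Fin (n+1) => y' i.1) c' →
      (∀ z : X n, piFin0 X πo (n+1) (fun i : Fin (n+1) => y i.1) c ≠ φs n z) →
      ∀ i < n, y i = y' i := by
  intro n
  induction n with
  | zero => intro _ _ _ _ _ _ i hi; omega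
  | succ n ih =>
    intro y y' c c' heq hnr
    rw [piFin0_word_succ', piFin0_word_succ'] at heq
    by_cases hcase : ((y 0 : Y), piFin0 X πo (n+1) (fun i : Fin (n+1) => y (i.1+1)) c)
        = (y' 0, piFin0 X πo (n+1) (fun i : Fin (n+1) => y' (i.1+1)) c')
    · rw [Prod.mk.injEq] at hcase
      obtain ⟨h1, h2⟩ := hcase
      have hDnr : ∀ z : X n,
          piFin0 X πo (n+1) (fun i : Fin (n+1) => y (i.1+1)) c ≠ φs n z := by
        intro z hz
        apply hnr (πo n (y 0) z)
        rw [piFin0_word_succ', hz, hcomm]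
      have hrec := ih (fun k => y (k+1)) (fun k => y' (k+1)) c c' h2 hDnr
      intro i hi
      cases i with
      | zero => exact h1
      | succ j => exact hrec j (by omega)
    · exfalso
      obtain ⟨a, b, hDa, _, _⟩ := hquot (n+1) (y 0) (y' 0) _ _ heq hcase
      apply hnr (phiTo X φs (Nat.succ_le_succ (Nat.zero_le n)) (πo 0 (y 0) a))
      rw [piFin0_word_succ', hDa, pio_phiTo' φs πo hcomm,
        phiTo_succ' φs (Nat.succ_le_succ (Nat.zero_le n))]

lemma bound' (hφi : ∀ n, Function.Injective (φs n))
    (hπs : ∀ n, Function.Surjective fun p : Y × X n => πo n p.1 p.2)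
    (hcomm : ∀ (n : ℕ) (y : Y) (x : X n), πo (n + 1) y (φs n x) = φs (n + 1) (πo n y x))
    (hquot : ∀ (n : ℕ) (y y' : Y) (ξ ξ' : X n), πo n y ξ = πo n y' ξ' → (y, ξ) ≠ (y', ξ') →
      ∃ x0 x0' : X 0, ξ = phiTo X φs (Nat.zero_le n) x0 ∧ ξ' = phiTo X φs (Nat.zero_le n) x0' ∧
        πo 0 y x0 = πo 0 y' x0')
    {m : ℕ} :
    ∀ (n : ℕ) (x : X n) (a b : ℕ → Y), a ∈ Gamma X φs πo n x → b ∈ Gamma X φs πo n x →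
      a m ≠ b m →
      ∃ x' : X (m+2), a ∈ Gamma X φs πo (m+2) x' ∧ b ∈ Gamma X φs πo (m+2) x' := by
  intro n
  induction n using Nat.strong_induction_on with
  | _ n ihn =>
    intro x a b ha hb hm
    rcases le_or_gt n (m+2) with h | h
    · exact ⟨phiTo X φs h x, gamma_le' φs πo h ha, gamma_le' φs πo h hb⟩
    · obtain ⟨k, rfl⟩ : ∃ k, n = k+1 := ⟨n-1, by omega⟩
      by_cases hr : ∃ z : X k, x = φs k z
      · obtain ⟨z, hz⟩ := hr
        rw [hz] at ha hb
        exact ihn k (by omega) z a b (gamma_down' φs πo hφi hπs hcomm hquot ha)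
          (gamma_down' φs πo hφi hπs hcomm hquot hb) hm
      · exfalso
        obtain ⟨c, hc⟩ := ha (k+1) (le_refl _)
        obtain ⟨c', hc'⟩ := hb (k+1) (le_refl _)
        rw [phiTo_self'] at hc hc'
        have hnr : ∀ z : X k, piFin0 X πo (k+1) (fun i : Fin (k+1) => a i.1) c ≠ φs k z := by
          intro z hz
          exact hr ⟨z, by rw [hc]; exact hz⟩
        exact hm (lemD' φs πo hcomm hquot k a b c c' (by rw [← hc, ← hc']) hnr m (by omega))

lemma simRel_equiv' (hfull : ∀ (p : ℕ) (xp xp' : X p) (y : ℕ → Y),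
      y ∈ Gamma X φs πo p xp → y ∈ Gamma X φs πo p xp' → xp = xp') :
    Equivalence (simRel X φs πo) := by
  constructor
  · exact fun x => Or.inl rfl
  · rintro a b (rfl | ⟨n, x, h1, h2⟩)
    · exact Or.inl rfl
    · exact Or.inr ⟨n, x, h2, h1⟩
  · rintro a b c hab hbc
    rcases hab with rfl | ⟨n, x, h1, h2⟩
    · exact hbc
    rcases hbc with rfl | ⟨k, x', h3, h4⟩
    · exact Or.inr ⟨n, x, h1, h2⟩
    rcases le_or_gt n k with h | h
    · have hb := gamma_le' φs πo h h2
      have hx := hfull k (phiTo X φs h x) x' b hb h3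
      exact Or.inr ⟨k, x', by rw [← hx]; exact gamma_le' φs πo h h1, h4⟩
    · have hb := gamma_le' φs πo h.le h3
      have hx := hfull n x (phiTo X φs h.le x') b h2 hb
      exact Or.inr ⟨n, x, h1, by rw [hx]; exact gamma_le' φs πo h.le h4⟩

variable [TopologicalSpace Y] [CompactSpace Y] [T2Space Y]
  [∀ n, TopologicalSpace (X n)] [∀ n, CompactSpace (X n)] [∀ n, T2Space (X n)]

lemma gammaGraph_closed' (hφc : ∀ n, Continuous (φs n))
    (hπc : ∀ n, Continuous fun p : Y × X n => πo n p.1 p.2) (n : ℕ) :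
    IsClosed {q : X n × (ℕ → Y) | q.2 ∈ Gamma X φs πo n q.1} := by
  have hset : {q : X n × (ℕ → Y) | q.2 ∈ Gamma X φs πo n q.1}
      = ⋂ (p : ℕ), ⋂ (h : n ≤ p),
          {q : X n × (ℕ → Y) |
            ∃ c : X 0, phiTo X φs h q.1 = piFin0 X πo p (fun i : Fin p => q.2 i.1) c} := by
    ext q
    simp only [Set.mem_iInter, Set.mem_setOf_eq]
    rfl
  rw [hset]
  refine isClosed_iInter fun p => isClosed_iInter fun hnp => ?_
  have hZ : IsClosed {zw : X p × (Fin p → Y) | ∃ c : X 0, zw.1 = piFin0 X πo p zw.2 c} := by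
    have himg : {zw : X p × (Fin p → Y) | ∃ c : X 0, zw.1 = piFin0 X πo p zw.2 c}
        = (fun wc : (Fin p → Y) × X 0 => (piFin0 X πo p wc.1 wc.2, wc.1)) '' Set.univ := by
      ext ⟨z, w⟩
      constructor
      · rintro ⟨c, hc⟩
        exact ⟨(w, c), trivial, by rw [Prod.mk.injEq]; exact ⟨hc.symm, rfl⟩⟩
      · rintro ⟨⟨w', c⟩, -, heq⟩
        rw [Prod.mk.injEq] at heq
        exact ⟨c, by rw [← heq.1, ← heq.2]⟩
    rw [himg]
    exact (isCompact_univ.image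
      ((piFin0_cont' πo hπc p).prodMk continuous_fst)).isClosed
  exact hZ.preimage (((phiTo_cont' φs hφc hnp).comp continuous_fst).prodMk
    (continuous_pi fun i => (continuous_apply i.1).comp continuous_snd))

lemma P_closed' (hφc : ∀ n, Continuous (φs n))
    (hπc : ∀ n, Continuous fun p : Y × X n => πo n p.1 p.2) (n : ℕ) :
    IsClosed {pq : (ℕ → Y) × (ℕ → Y) |
      ∃ x : X n, pq.1 ∈ Gamma X φs πo n x ∧ pq.2 ∈ Gamma X φs πo n x} := by
  have hK : IsClosed {q : X n × ((ℕ → Y) × (ℕ → Y)) |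
      q.2.1 ∈ Gamma X φs πo n q.1 ∧ q.2.2 ∈ Gamma X φs πo n q.1} := by
    have h1 := (gammaGraph_closed' φs πo hφc hπc n).preimage
      (continuous_fst.prodMk (continuous_fst.comp continuous_snd) :
        Continuous fun q : X n × ((ℕ → Y) × (ℕ → Y)) => (q.1, q.2.1))
    have h2 := (gammaGraph_closed' φs πo hφc hπc n).preimage
      (continuous_fst.prodMk (continuous_snd.comp continuous_snd) :
        Continuous fun q : X n × ((ℕ → Y) × (ℕ → Y)) => (q.1, q.2.2))
    exact h1.inter h2
  have himg : {pq : (ℕ → Y) × (ℕ → Y) |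
        ∃ x : X n, pq.1 ∈ Gamma X φs πo n x ∧ pq.2 ∈ Gamma X φs πo n x}
      = Prod.snd '' {q : X n × ((ℕ → Y) × (ℕ → Y)) |
          q.2.1 ∈ Gamma X φs πo n q.1 ∧ q.2.2 ∈ Gamma X φs πo n q.1} := by
    ext pq
    constructor
    · rintro ⟨x, h1, h2⟩
      exact ⟨(x, pq), ⟨h1, h2⟩, rfl⟩
    · rintro ⟨⟨x, pq'⟩, ⟨h1, h2⟩, rfl⟩
      exact ⟨x, h1, h2⟩
  rw [himg]
  exact (hK.isCompact.image continuous_snd).isClosed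

end AuxLemmas

variable {X : ℕ → Type}
  [TopologicalSpace Y] [CompactSpace Y] [T2Space Y]
  [∀ n, TopologicalSpace (X n)] [∀ n, CompactSpace (X n)] [∀ n, T2Space (X n)]

theorem statement_16
    (φs : ∀ n, X n → X (n + 1)) (πo : ∀ n, Y → X n → X (n + 1))
    (hφc : ∀ n, Continuous (φs n)) (hφi : ∀ n, Function.Injective (φs n))
    (hπc : ∀ n, Continuous fun p : Y × X n => πo n p.1 p.2)
    (hπs : ∀ n, Function.Surjective fun p : Y × X n => πo n p.1 p.2)
    (hcomm : ∀ (n : ℕ) (y : Y) (x : X n), πo (n + 1) y (φs n x) = φs (n + 1) (πo n y x))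
    (hquot : ∀ (n : ℕ) (y y' : Y) (ξ ξ' : X n), πo n y ξ = πo n y' ξ' → (y, ξ) ≠ (y', ξ') →
      ∃ x0 x0' : X 0, ξ = phiTo X φs (Nat.zero_le n) x0 ∧ ξ' = phiTo X φs (Nat.zero_le n) x0' ∧
        πo 0 y x0 = πo 0 y' x0')
    (hfull : ∀ (p : ℕ) (xp xp' : X p) (y : ℕ → Y),
      y ∈ Gamma X φs πo p xp → y ∈ Gamma X φs πo p xp' → xp = xp') :
    IsClosed {p : (ℕ → Y) × (ℕ → Y) | simRel X φs πo p.1 p.2} ∧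
    CompactSpace (Quot (simRel X φs πo)) ∧ T2Space (Quot (simRel X φs πo)) := by
  have hequiv : Equivalence (simRel X φs πo) := simRel_equiv' φs πo hfull
  -- closedness of the relation
  have hS : IsClosed {p : (ℕ → Y) × (ℕ → Y) | simRel X φs πo p.1 p.2} := by
    rw [← closure_subset_iff_isClosed]
    rintro ⟨y, y'⟩ hyy
    by_cases he : y = y'
    · exact Or.inl he
    obtain ⟨m, hm⟩ := Function.ne_iff.mp he
    obtain ⟨U, V, hU, hV, hyU, hyV, hUV⟩ := t2_separation hm
    have hNopen : IsOpen {p : (ℕ → Y) × (ℕ → Y) | p.1 m ∈ U ∧ p.2 m ∈ V} :=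
      (hU.preimage ((continuous_apply m).comp continuous_fst)).inter
        (hV.preimage ((continuous_apply m).comp continuous_snd))
    have h1 : ((y, y') : (ℕ → Y) × (ℕ → Y)) ∈ closure
        ({p : (ℕ → Y) × (ℕ → Y) | p.1 m ∈ U ∧ p.2 m ∈ V} ∩
          {p : (ℕ → Y) × (ℕ → Y) | simRel X φs πo p.1 p.2}) :=
      hNopen.inter_closure ⟨⟨hyU, hyV⟩, hyy⟩
    have h2 : {p : (ℕ → Y) × (ℕ → Y) | p.1 m ∈ U ∧ p.2 m ∈ V} ∩
          {p : (ℕ → Y) × (ℕ → Y) | simRel X φs πo p.1 p.2}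
        ⊆ {pq : (ℕ → Y) × (ℕ → Y) |
            ∃ x : X (m+2), pq.1 ∈ Gamma X φs πo (m+2) x ∧ pq.2 ∈ Gamma X φs πo (m+2) x} := by
      rintro ⟨a, b⟩ ⟨⟨haU, hbV⟩, hab⟩
      have haU' : a m ∈ U := haU
      have hbV' : b m ∈ V := hbV
      have hne : a m ≠ b m := fun hh => Set.disjoint_left.mp hUV haU' (by rw [hh]; exact hbV')
      rcases hab with heq | ⟨n, x, ha, hb⟩
      · exact absurd (congrFun heq m) hne
      exact bound' φs πo hφi hπs hcomm hquot n x a b ha hb hne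
    have h3 := (closure_mono h2).trans_eq (P_closed' φs πo hφc hπc (m+2)).closure_eq
    obtain ⟨x', hx1, hx2⟩ := h3 h1
    exact Or.inr ⟨m+2, x', hx1, hx2⟩
  have hrel : ∀ a b : ℕ → Y,
      Quot.mk (simRel X φs πo) a = Quot.mk (simRel X φs πo) b ↔ simRel X φs πo a b :=
    fun a b => ⟨fun h => hequiv.eqvGen_iff.mp (Quot.eqvGen_exact h), Quot.sound⟩
  have hclosedmap : IsClosedMap (Quot.mk (simRel X φs πo)) := by
    intro C hC
    rw [← isQuotientMap_quot_mk.isClosed_preimage]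
    have himg : Quot.mk (simRel X φs πo) ⁻¹' (Quot.mk (simRel X φs πo) '' C)
        = Prod.snd '' ((C ×ˢ (Set.univ : Set (ℕ → Y))) ∩
            {p : (ℕ → Y) × (ℕ → Y) | simRel X φs πo p.1 p.2}) := by
      ext x
      simp only [Set.mem_preimage, Set.mem_image, Set.mem_inter_iff, Set.mem_prod,
        Set.mem_univ, Set.mem_setOf_eq, and_true]
      constructor
      · rintro ⟨c, hcC, hq⟩
        exact ⟨(c, x), ⟨hcC, (hrel c x).mp hq⟩, rfl⟩
      · rintro ⟨⟨c, x'⟩, ⟨hcC, hsim⟩, rfl⟩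
        exact ⟨c, hcC, Quot.sound hsim⟩
    rw [himg]
    exact isClosedMap_snd_of_compactSpace _ ((hC.prod isClosed_univ).inter hS)
  refine ⟨hS, inferInstance, ?_⟩
  constructor
  intro q1 q2 hq
  obtain ⟨a, rfl⟩ := Quot.exists_rep q1
  obtain ⟨b, rfl⟩ := Quot.exists_rep q2
  have hCac : IsClosed {x : ℕ → Y | simRel X φs πo a x} := hS.preimage (Continuous.prodMk_right a)
  have hCbc : IsClosed {x : ℕ → Y | simRel X φs πo b x} := hS.preimage (Continuous.prodMk_right b)
  have hdisj : Disjoint {x : ℕ → Y | simRel X φs πo a x} {x : ℕ → Y | simRel X φs πo b x} := by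
    rw [Set.disjoint_left]
    intro x hxa hxb
    exact hq (Quot.sound (hequiv.trans hxa (hequiv.symm hxb)))
  obtain ⟨U, V, hU, hV, hCaU, hCbV, hUV⟩ :=
    SeparatedNhds.of_isCompact_isCompact_isClosed hCac.isCompact hCbc.isCompact hCbc hdisj
  refine ⟨(Quot.mk (simRel X φs πo) '' Uᶜ)ᶜ, (Quot.mk (simRel X φs πo) '' Vᶜ)ᶜ,
    (hclosedmap _ hU.isClosed_compl).isOpen_compl,
    (hclosedmap _ hV.isClosed_compl).isOpen_compl, ?_, ?_, ?_⟩
  · rintro ⟨x, hx, hxa⟩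
    exact hx (hCaU (hequiv.symm ((hrel x a).mp hxa)))
  · rintro ⟨x, hx, hxb⟩
    exact hx (hCbV (hequiv.symm ((hrel x b).mp hxb)))
  · rw [Set.disjoint_left]
    rintro q hqU hqV
    obtain ⟨x, rfl⟩ := Quot.exists_rep q
    by_cases hxU : x ∈ U
    · by_cases hxV : x ∈ V
      · exact Set.disjoint_left.mp hUV hxU hxV
      · exact hqV ⟨x, hxV, rfl⟩
    · exact hqU ⟨x, hxU, rfl⟩
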